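/- Let μ be a probability measure on Fin m and let n ≥ 1; write P(y) = μ {y}. On the product space (Fin n → Fin m) with measure μ^{⊗n}, define the empirical distribution P̃(ω)(y) = |{ j : ω j = y }| / n. Then the expected L₁-distance between the empirical distribution and μ satisfies E[ ∑_{y ∈ Fin m} |P̃(ω)(y) − P(y)| ] ≤ √(m/n), where the expectation is the integral with respect to μ^{⊗n}. -/

import Mathlib

open MeasureTheory Finset

section helpers
variable {m : ℕ} (μ : Measure (Fin m)) [IsProbabilityMeasure μ]

lemma pi_marg {n : ℕ} (g : Fin m → ℝ) (j : Fin n) :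
    ∫ ω : Fin n → Fin m, g (ω j) ∂(Measure.pi fun _ => μ) = ∫ x, g x ∂μ := by
  letI : MeasureSpace (Fin m) := ⟨μ⟩
  rw [show (Measure.pi fun _ : Fin n => μ) = volume from (volume_pi).symm]
  calc ∫ ω : Fin n → Fin m, g (ω j)
      = ∫ ω : Fin n → Fin m, ∏ i, (fun i x => if i = j then g x else 1) i (ω i) := by
        congr 1; funext ω; simp
    _ = ∏ i, ∫ x, (if i = j then g x else 1) :=
        integral_fintype_prod_eq_prod (fun i x => if i = j then g x else 1)
    _ = ∫ x, g x := by
        have : ∀ i : Fin n, (∫ x, (if i = j then g x else 1)) = if i = j then ∫ x, g x else 1 := by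
          intro i; split_ifs <;> simp
        simp [this]

lemma pi_mul {n : ℕ} (g h : Fin m → ℝ) {j k : Fin n} (hjk : j ≠ k) :
    ∫ ω : Fin n → Fin m, g (ω j) * h (ω k) ∂(Measure.pi fun _ => μ)
      = (∫ x, g x ∂μ) * (∫ x, h x ∂μ) := by
  letI : MeasureSpace (Fin m) := ⟨μ⟩
  rw [show (Measure.pi fun _ : Fin n => μ) = volume from (volume_pi).symm]
  calc ∫ ω : Fin n → Fin m, g (ω j) * h (ω k)
      = ∫ ω : Fin n → Fin m,
          ∏ i, (fun i x => (if i = j then g x else 1) * (if i = k then h x else 1)) i (ω i) := by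
        congr 1; funext ω
        rw [Finset.prod_mul_distrib]
        simp
    _ = ∏ i, ∫ x, (if i = j then g x else 1) * (if i = k then h x else 1) :=
        integral_fintype_prod_eq_prod
          (fun i x => (if i = j then g x else 1) * (if i = k then h x else 1))
    _ = (∫ x, g x) * (∫ x, h x) := by
        have : ∀ i : Fin n, (∫ x, (if i = j then g x else 1) * (if i = k then h x else 1))
            = (if i = j then ∫ x, g x else 1) * (if i = k then ∫ x, h x else 1) := by
          intro i
          rcases eq_or_ne i j with rfl | hij
          · simp [hjk]
          · rcases eq_or_ne i k with rfl | hik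
            · simp [hij]
            · simp [hij, hik]
        rw [Finset.prod_congr rfl (fun i _ => this i), Finset.prod_mul_distrib]
        simp

lemma wsum : ∑ x : Fin m, (μ {x}).toReal = 1 := by
  have h := integral_fintype (μ := μ) (f := fun _ : Fin m => (1:ℝ)) (Integrable.of_finite)
  simpa [measureReal_def] using h.symm

lemma mean_zero (y : Fin m) :
    ∫ x, ((if x = y then (1:ℝ) else 0) - (μ {y}).toReal) ∂μ = 0 := by
  rw [integral_fintype (Integrable.of_finite)]
  simp only [measureReal_def, smul_eq_mul, mul_sub, Finset.sum_sub_distrib, mul_ite, mul_one, mul_zero]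
  rw [Finset.sum_ite_eq' univ y (fun x => (μ {x}).toReal), ← Finset.sum_mul, wsum μ]
  simp

lemma sq_int (y : Fin m) :
    ∫ x, ((if x = y then (1:ℝ) else 0) - (μ {y}).toReal)^2 ∂μ
      = (μ {y}).toReal - (μ {y}).toReal^2 := by
  set p := (μ {y}).toReal with hp
  rw [integral_fintype (Integrable.of_finite)]
  have hexp : ∀ x : Fin m, ((if x = y then (1:ℝ) else 0) - p)^2
      = (1 - 2*p) * (if x = y then (1:ℝ) else 0) + p^2 := by
    intro x; split_ifs <;> ring
  simp only [measureReal_def, smul_eq_mul, hexp, mul_add, Finset.sum_add_distrib, mul_ite, mul_one, mul_zero]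
  rw [Finset.sum_ite_eq' univ y (fun x => (μ {x}).toReal * (1 - 2*p))]
  rw [← Finset.sum_mul, wsum μ]
  simp; ring

end helpers

lemma l1_le_l2 {α : Type*} [Fintype α] [MeasurableSpace α] [MeasurableSingletonClass α]
    (ν : Measure α) [IsProbabilityMeasure ν] (S : α → ℝ) :
    ∫ x, |S x| ∂ν ≤ Real.sqrt (∫ x, (S x)^2 ∂ν) := by
  rw [integral_fintype (Integrable.of_finite), integral_fintype (Integrable.of_finite)]; simp only [measureReal_def]
  set w : α → ℝ := fun x => (ν {x}).toReal with hw
  have hw0 : ∀ x, 0 ≤ w x := fun x => ENNReal.toReal_nonneg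
  have hw1 : ∑ x, w x = 1 := by
    have h := integral_fintype (μ := ν) (f := fun _ : α => (1:ℝ)) (Integrable.of_finite)
    simpa [measureReal_def] using h.symm
  rw [Real.le_sqrt (Finset.sum_nonneg fun x _ => by positivity)
    (Finset.sum_nonneg fun x _ => smul_nonneg ENNReal.toReal_nonneg (sq_nonneg _))]
  calc (∑ x, w x • |S x|)^2
      = (∑ x, Real.sqrt (w x) * (Real.sqrt (w x) * |S x|))^2 := by
        congr 1; refine Finset.sum_congr rfl fun x _ => ?_
        rw [← mul_assoc, Real.mul_self_sqrt (hw0 x), smul_eq_mul]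
    _ ≤ (∑ x, Real.sqrt (w x)^2) * ∑ x, (Real.sqrt (w x) * |S x|)^2 :=
        Finset.sum_mul_sq_le_sq_mul_sq _ _ _
    _ = ∑ x, w x • (S x)^2 := by
        have : ∑ x, Real.sqrt (w x)^2 = 1 := by
          rw [← hw1]; exact Finset.sum_congr rfl fun x _ => Real.sq_sqrt (hw0 x)
        rw [this, one_mul]
        refine Finset.sum_congr rfl fun x _ => ?_
        rw [mul_pow, Real.sq_sqrt (hw0 x), sq_abs, smul_eq_mul]

/-- The empirical distribution of `n` i.i.d. samples from `μ` is within expected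
`L₁`-distance `√(m/n)` of `μ`. -/
theorem empirical_distribution_L1_error (m n : ℕ) (hn : 1 ≤ n)
    (μ : Measure (Fin m)) [IsProbabilityMeasure μ] :
    (∫ ω : Fin n → Fin m,
        ∑ y : Fin m,
          |((univ.filter fun j : Fin n => ω j = y).card : ℝ) / n - (μ {y}).toReal|
        ∂(Measure.pi fun _ : Fin n => μ))
      ≤ Real.sqrt (m / n) := by
  set ν : Measure (Fin n → Fin m) := Measure.pi fun _ : Fin n => μ with hν
  have hn0 : (0:ℝ) < n := by exact_mod_cast hn
  set p : Fin m → ℝ := fun y => (μ {y}).toReal with hpdef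
  have hp0 : ∀ y, 0 ≤ p y := fun y => ENNReal.toReal_nonneg
  set f : Fin m → Fin m → ℝ := fun y x => (if x = y then 1 else 0) - p y with hfdef
  -- pointwise rewrite of the integrand
  have hpt : ∀ (y : Fin m) (ω : Fin n → Fin m),
      ((univ.filter fun j : Fin n => ω j = y).card : ℝ) / n - p y
        = (∑ j : Fin n, f y (ω j)) / n := by
    intro y ω
    have hcard : ((univ.filter fun j : Fin n => ω j = y).card : ℝ)
        = ∑ j : Fin n, (if ω j = y then (1:ℝ) else 0) := by
      rw [Finset.card_filter]
      push_cast
      simp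
    rw [hcard]
    simp only [hfdef, Finset.sum_sub_distrib, Finset.sum_const, Finset.card_univ,
      Fintype.card_fin, nsmul_eq_mul]
    field_simp
  -- variance computation
  have hvar : ∀ y : Fin m,
      ∫ ω, (∑ j : Fin n, f y (ω j))^2 ∂ν = n * (p y - p y ^ 2) := by
    intro y
    have hexp : ∀ ω : Fin n → Fin m, (∑ j : Fin n, f y (ω j))^2
        = ∑ j : Fin n, ∑ k : Fin n, f y (ω j) * f y (ω k) := by
      intro ω; rw [sq, Finset.sum_mul_sum]
    simp_rw [hexp]
    rw [integral_finset_sum _ (fun j _ => Integrable.of_finite)]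
    have : ∀ j : Fin n, ∫ ω, ∑ k : Fin n, f y (ω j) * f y (ω k) ∂ν = p y - p y ^ 2 := by
      intro j
      rw [integral_finset_sum _ (fun k _ => Integrable.of_finite)]
      rw [Finset.sum_eq_single j]
      · have := pi_marg μ (fun x => f y x * f y x) j
        rw [this]
        have : ∫ x, f y x * f y x ∂μ = ∫ x, (f y x)^2 ∂μ := by
          congr 1; funext x; rw [sq]
        rw [this, sq_int]
      · intro k _ hkj
        rw [pi_mul μ (f y) (f y) (Ne.symm hkj), mean_zero]
        simp
      · simp
    simp_rw [this]
    simp [mul_comm]; ring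
  -- per-coordinate bound
  have hone : ∀ y : Fin m,
      ∫ ω, |((univ.filter fun j : Fin n => ω j = y).card : ℝ) / n - p y| ∂ν
        ≤ Real.sqrt (p y / n) := by
    intro y
    have h1 : ∀ ω : Fin n → Fin m, |((univ.filter fun j : Fin n => ω j = y).card : ℝ) / n - p y|
        = |∑ j : Fin n, f y (ω j)| / n := by
      intro ω; rw [hpt y ω, abs_div, abs_of_pos hn0]
    simp_rw [h1]
    rw [integral_div]
    have h2 : ∫ ω, |∑ j : Fin n, f y (ω j)| ∂ν
        ≤ Real.sqrt (n * (p y - p y ^ 2)) := by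
      have := l1_le_l2 ν (fun ω => ∑ j : Fin n, f y (ω j))
      rw [hvar y] at this
      exact this
    calc (∫ ω, |∑ j : Fin n, f y (ω j)| ∂ν) / n
        ≤ Real.sqrt (n * (p y - p y ^ 2)) / n := by gcongr
      _ ≤ Real.sqrt (n * p y) / n := by
          gcongr
          nlinarith [sq_nonneg (p y)]
      _ = Real.sqrt (p y / n) := by
          rw [Real.sqrt_div (hp0 y), div_eq_div_iff (ne_of_gt hn0) (ne_of_gt (Real.sqrt_pos.mpr hn0)),
            Real.sqrt_mul (le_of_lt hn0)]
          have hss : Real.sqrt n * Real.sqrt n = n := Real.mul_self_sqrt (le_of_lt hn0)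
          linear_combination Real.sqrt (p y) * hss
  -- combine
  calc (∫ ω : Fin n → Fin m, ∑ y : Fin m,
          |((univ.filter fun j : Fin n => ω j = y).card : ℝ) / n - p y| ∂ν)
      = ∑ y : Fin m, ∫ ω, |((univ.filter fun j : Fin n => ω j = y).card : ℝ) / n - p y| ∂ν :=
        integral_finset_sum _ (fun y _ => Integrable.of_finite)
    _ ≤ ∑ y : Fin m, Real.sqrt (p y / n) := Finset.sum_le_sum fun y _ => hone y
    _ ≤ Real.sqrt (m / n) := by
        have hcs : (∑ y : Fin m, Real.sqrt (p y))^2 ≤ (m : ℝ) := by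
          have := Finset.sum_mul_sq_le_sq_mul_sq univ (fun _ : Fin m => (1:ℝ))
            (fun y => Real.sqrt (p y))
          simp only [one_mul, one_pow, Finset.sum_const, Finset.card_univ,
            Fintype.card_fin, nsmul_eq_mul, mul_one] at this
          calc (∑ y : Fin m, Real.sqrt (p y))^2
              ≤ (m : ℝ) * ∑ y : Fin m, Real.sqrt (p y)^2 := this
            _ = m := by
                have h1 : ∑ y : Fin m, Real.sqrt (p y)^2 = 1 := by
                  rw [Finset.sum_congr rfl fun y _ => Real.sq_sqrt (hp0 y)]
                  exact wsum μ
                rw [h1, mul_one]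
        have hsum : ∑ y : Fin m, Real.sqrt (p y) ≤ Real.sqrt m :=
          Real.le_sqrt_of_sq_le hcs
        calc ∑ y : Fin m, Real.sqrt (p y / n)
            = (∑ y : Fin m, Real.sqrt (p y)) / Real.sqrt n := by
              rw [Finset.sum_div]
              exact Finset.sum_congr rfl fun y _ => Real.sqrt_div (hp0 y) n
          _ ≤ Real.sqrt m / Real.sqrt n := by gcongr
          _ = Real.sqrt (m / n) := (Real.sqrt_div (Nat.cast_nonneg m) n).symm
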